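/- Let K = ℚ(q), let [k]_q = 1 + q + ⋯ + q^{k-1}, and define log_χ(T) = Σ_{k≥1} ([k]_q / k)·T^k ∈ K⟦T⟧ and exp_χ(T) = (E(T) - 1)·(E(T) - q)^{-1} ∈ K⟦T⟧ with E(T) = exp((1-q)·T). In K⟦X,Y⟧ the element 1 - q·X·Y is a unit; define G(X,Y) = (X + Y - (1+q)·X·Y)·(1 - q·X·Y)^{-1}. Then exp_χ(log_χ(X) + log_χ(Y)) = G(X,Y) in K⟦X,Y⟧; equivalently, log_χ(G(X,Y)) = log_χ(X) + log_χ(Y), i.e. log_χ is a logarithm for the formal group law G. -/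

import Mathlib

noncomputable section

/-- The field `K = ℚ(q)` of rational functions. -/
abbrev K : Type := RatFunc ℚ

/-- The variable `q ∈ ℚ(q)`. -/
noncomputable def q : K := RatFunc.X

/-- `log_χ(T) = Σ_{k ≥ 1} ([k]_q / k) T^k`, where `[k]_q = 1 + q + ⋯ + q^{k-1}`. -/
noncomputable def logChi : PowerSeries K :=
  PowerSeries.mk fun k => (∑ i ∈ Finset.range k, q ^ i) / (k : K)

/-- `E(T) = exp((1-q)·T)`. -/
noncomputable def E : PowerSeries K := PowerSeries.rescale (1 - q) (PowerSeries.exp K)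

/-- `exp_χ(T) = (E(T) - 1) · (E(T) - q)⁻¹`, with `E(T) - q` of constant term
`1 - q ≠ 0`, hence invertible. -/
noncomputable def expChi : PowerSeries K := (E - 1) * (E - PowerSeries.C q)⁻¹

/-- Substitution of a two-variable formal power series `G` with zero constant
term into a one-variable formal power series `f`. -/
noncomputable def substInto (f : PowerSeries K) (G : MvPowerSeries (Fin 2) K) :
    MvPowerSeries (Fin 2) K :=
  fun d =>
    MvPowerSeries.coeff d
      (∑ k ∈ Finset.range ((d.sum fun _ n => n) + 1),
        MvPowerSeries.C (PowerSeries.coeff k f) * G ^ k)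

/-- `G(X,Y) = (X + Y - (1+q)·X·Y) · (1 - q·X·Y)⁻¹`, where `1 - q·X·Y` is a
unit of `K⟦X,Y⟧` since its constant term is `1`. -/
noncomputable def G : MvPowerSeries (Fin 2) K :=
  letI X : MvPowerSeries (Fin 2) K := MvPowerSeries.X 0
  letI Y : MvPowerSeries (Fin 2) K := MvPowerSeries.X 1
  (X + Y - MvPowerSeries.C (1 + q) * X * Y) *
    MvPowerSeries.invOfUnit (1 - MvPowerSeries.C q * X * Y) 1

namespace SAux

lemma natCast_succ_ne (n : ℕ) : ((n : K) + 1) ≠ 0 := by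
  have hcast : ((n : K) + 1) = algebraMap ℚ K ((n : ℚ) + 1) := by
    rw [map_add, map_natCast, map_one]
  rw [hcast]
  intro h
  have := RingHom.injective (algebraMap ℚ K) (h.trans (map_zero (algebraMap ℚ K)).symm)
  have h2 : ((n : ℚ) + 1) ≠ 0 := Nat.cast_add_one_ne_zero n
  exact h2 this


open MvPowerSeries Finset

variable {σ : Type} 

/-- total degree of an exponent -/
def wt (d : σ →₀ ℕ) : ℕ := d.sum fun _ n => n

lemma wt_add (a b : σ →₀ ℕ) : wt (a + b) = wt a + wt b := by
  simpa [wt] using Finsupp.sum_add_index' (fun _ => rfl) (fun _ _ _ => rfl)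

lemma eq_zero_of_wt_eq_zero {d : σ →₀ ℕ} (h : wt d = 0) : d = 0 := by
  ext i
  by_cases hi : i ∈ d.support
  · have := Finset.sum_eq_zero_iff.mp h i hi
    simpa using this
  · simpa using Finsupp.notMem_support_iff.mp hi

/-- substitution -/
def ssub (f : PowerSeries K) (G : MvPowerSeries σ K) : MvPowerSeries σ K :=
  fun d =>
    MvPowerSeries.coeff (R := K) d
      (∑ k ∈ Finset.range ((d.sum fun _ n => n) + 1),
        MvPowerSeries.C (σ := σ) (R := K) (PowerSeries.coeff (R := K) k f) * G ^ k)

lemma coeff_sub_def (f : PowerSeries K) (G : MvPowerSeries σ K) (d : σ →₀ ℕ) :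
    MvPowerSeries.coeff (R := K) d (ssub f G) =
      ∑ k ∈ Finset.range (wt d + 1),
        PowerSeries.coeff (R := K) k f * MvPowerSeries.coeff (R := K) d (G ^ k) := by
  show MvPowerSeries.coeff (R := K) d
      (∑ k ∈ Finset.range (wt d + 1),
        MvPowerSeries.C (σ := σ) (R := K) (PowerSeries.coeff (R := K) k f) * G ^ k) = _
  rw [map_sum]
  exact Finset.sum_congr rfl fun k _ => coeff_C_mul _ _ _

variable [DecidableEq σ]

lemma coeff_pow_mul_eq_zero {a : MvPowerSeries σ K} (ha : constantCoeff (σ := σ) (R := K) a = 0) :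
    ∀ (k : ℕ) (F : MvPowerSeries σ K) (d : σ →₀ ℕ), wt d < k →
      MvPowerSeries.coeff (R := K) d (a ^ k * F) = 0 := by
  intro k
  induction k with
  | zero => intro F d h; omega
  | succ k ih =>
    intro F d h
    rw [pow_succ', mul_assoc, coeff_mul]
    apply Finset.sum_eq_zero
    rintro ⟨u, v⟩ hp
    have hp' : u + v = d := Finset.HasAntidiagonal.mem_antidiagonal.mp hp
    by_cases hu : u = 0
    · simp [hu, show MvPowerSeries.coeff (R := K) 0 a = 0 from ha]
    · have h1 : 1 ≤ wt u := by
        rcases Nat.eq_zero_or_pos (wt u) with h0 | h0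
        · exact absurd (eq_zero_of_wt_eq_zero h0) hu
        · exact h0
      have : wt v < k := by
        have := wt_add u v
        rw [hp'] at this
        omega
      simp [ih F v this]

lemma coeff_pow_eq_zero {a : MvPowerSeries σ K} (ha : constantCoeff (σ := σ) (R := K) a = 0)
    {k : ℕ} {d : σ →₀ ℕ} (h : wt d < k) : MvPowerSeries.coeff (R := K) d (a ^ k) = 0 := by
  have := coeff_pow_mul_eq_zero ha k 1 d h
  simpa using this

lemma coeff_pow_pow_eq_zero {a b : MvPowerSeries σ K} (ha : constantCoeff (σ := σ) (R := K) a = 0)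
    (hb : constantCoeff (σ := σ) (R := K) b = 0) {i j : ℕ} {d : σ →₀ ℕ} (h : wt d < i + j) :
    MvPowerSeries.coeff (R := K) d (a ^ i * b ^ j) = 0 := by
  rw [coeff_mul]
  apply Finset.sum_eq_zero
  rintro ⟨u, v⟩ hp
  have hp' : u + v = d := Finset.HasAntidiagonal.mem_antidiagonal.mp hp
  have hw : wt u + wt v = wt d := by rw [← wt_add, hp']
  by_cases hu : wt u < i
  · rw [coeff_pow_eq_zero ha hu, zero_mul]
  · have : wt v < j := by omega
    rw [coeff_pow_eq_zero hb this, mul_zero]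

/-- stability -/
lemma coeff_sub {G : MvPowerSeries σ K} (hG : constantCoeff (σ := σ) (R := K) G = 0)
    (f : PowerSeries K) {d : σ →₀ ℕ} {m : ℕ} (hm : wt d < m) :
    MvPowerSeries.coeff (R := K) d (ssub f G) =
      ∑ k ∈ Finset.range m, PowerSeries.coeff (R := K) k f * MvPowerSeries.coeff (R := K) d (G ^ k) := by
  rw [coeff_sub_def]
  apply Finset.sum_subset
  · intro k hk
    simp only [Finset.mem_range] at *
    omega
  · intro k _ hk
    simp only [Finset.mem_range, not_lt] at hk
    rw [coeff_pow_eq_zero hG (by omega), mul_zero]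


lemma constantCoeff_ssub {G : MvPowerSeries σ K} (hG : constantCoeff (σ := σ) (R := K) G = 0)
    (f : PowerSeries K) :
    constantCoeff (σ := σ) (R := K) (ssub f G) = PowerSeries.constantCoeff (R := K) f := by
  have h0 : wt (0 : σ →₀ ℕ) = 0 := by simp [wt]
  have := coeff_sub (d := (0 : σ →₀ ℕ)) hG f (m := 1) (by omega)
  rw [← MvPowerSeries.coeff_zero_eq_constantCoeff, this]
  simp [PowerSeries.coeff_zero_eq_constantCoeff]

lemma ssub_add (f g : PowerSeries K) (G : MvPowerSeries σ K) :
    ssub (f + g) G = ssub f G + ssub g G := by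
  ext d
  rw [map_add, coeff_sub_def, coeff_sub_def, coeff_sub_def, ← Finset.sum_add_distrib]
  exact Finset.sum_congr rfl fun k _ => by rw [map_add, add_mul]

lemma ssub_one (G : MvPowerSeries σ K) : ssub (1 : PowerSeries K) G = 1 := by
  ext d
  rw [coeff_sub_def]
  rw [Finset.sum_eq_single 0]
  · simp
  · intro k _ hk
    rw [PowerSeries.coeff_one, if_neg hk, zero_mul]
  · simp

lemma ssub_C (a : K) (G : MvPowerSeries σ K) :
    ssub (PowerSeries.C (R := K) a) G = MvPowerSeries.C (σ := σ) (R := K) a := by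
  ext d
  rw [coeff_sub_def]
  rw [Finset.sum_eq_single 0]
  · rw [MvPowerSeries.coeff_C]
    simp only [pow_zero, PowerSeries.coeff_zero_eq_constantCoeff, PowerSeries.constantCoeff_C]
    rw [MvPowerSeries.coeff_one]
    split <;> simp
  · intro k _ hk
    rw [PowerSeries.coeff_C, if_neg hk, zero_mul]
  · simp

lemma ssub_X {G : MvPowerSeries σ K} (hG : constantCoeff (σ := σ) (R := K) G = 0) :
    ssub (PowerSeries.X : PowerSeries K) G = G := by
  ext d
  rw [coeff_sub hG PowerSeries.X (m := wt d + 2) (by omega)]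
  rw [Finset.sum_eq_single 1]
  · simp
  · intro k _ hk
    rw [PowerSeries.coeff_X, if_neg hk, zero_mul]
  · intro h
    simp at h

/-- replace a factor in a product by something that agrees on low coefficients -/
lemma coeff_mul_congr {A A' B B' : MvPowerSeries σ K} (d : σ →₀ ℕ)
    (h : ∀ e : σ →₀ ℕ, wt e ≤ wt d → MvPowerSeries.coeff (R := K) e A = MvPowerSeries.coeff (R := K) e A')
    (h' : ∀ e : σ →₀ ℕ, wt e ≤ wt d → MvPowerSeries.coeff (R := K) e B = MvPowerSeries.coeff (R := K) e B') :
    MvPowerSeries.coeff (R := K) d (A * B) = MvPowerSeries.coeff (R := K) d (A' * B') := by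
  rw [coeff_mul, coeff_mul]
  apply Finset.sum_congr rfl
  rintro ⟨u, v⟩ hp
  have hp' : u + v = d := Finset.HasAntidiagonal.mem_antidiagonal.mp hp
  have hw : wt u + wt v = wt d := by rw [← wt_add, hp']
  rw [h u (by omega), h' v (by omega)]

lemma sum_antidiag_prod (m : ℕ) (F : ℕ × ℕ → K) (hF : ∀ p : ℕ × ℕ, m ≤ p.1 + p.2 → F p = 0) :
    ∑ k ∈ Finset.range m, ∑ p ∈ Finset.HasAntidiagonal.antidiagonal k, F p =
      ∑ p ∈ Finset.range m ×ˢ Finset.range m, F p := by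
  have hdisj : ∀ x ∈ Finset.range m, ∀ y ∈ Finset.range m, x ≠ y →
      Disjoint (Finset.HasAntidiagonal.antidiagonal x) (Finset.HasAntidiagonal.antidiagonal y) := by
    intro x _ y _ hxy
    rw [Finset.disjoint_left]
    rintro ⟨a, b⟩ ha hb
    rw [Finset.HasAntidiagonal.mem_antidiagonal] at ha hb
    omega
  rw [← Finset.sum_biUnion hdisj]
  have hsub : (Finset.range m).biUnion (fun k => Finset.HasAntidiagonal.antidiagonal k) ⊆
      Finset.range m ×ˢ Finset.range m := by
    rintro ⟨a, b⟩ hp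
    simp only [Finset.mem_biUnion, Finset.HasAntidiagonal.mem_antidiagonal, Finset.mem_range] at hp
    obtain ⟨k, hk, hab⟩ := hp
    simp only [Finset.mem_product, Finset.mem_range]
    omega
  apply Finset.sum_subset hsub
  rintro ⟨a, b⟩ hp hnp
  simp only [Finset.mem_biUnion, Finset.HasAntidiagonal.mem_antidiagonal, Finset.mem_range] at hnp
  by_cases hab : a + b < m
  · exact absurd ⟨a + b, hab, rfl⟩ hnp
  · exact hF (a, b) (by omega)

lemma ssub_mul {G : MvPowerSeries σ K} (hG : constantCoeff (σ := σ) (R := K) G = 0) (f g : PowerSeries K) :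
    ssub (f * g) G = ssub f G * ssub g G := by
  ext d
  set n := wt d with hn
  set m := n + 1 with hm
  have hstep : MvPowerSeries.coeff (R := K) d (ssub f G * ssub g G) =
      MvPowerSeries.coeff (R := K) d
        ((∑ k ∈ Finset.range m, MvPowerSeries.C (σ := σ) (R := K) (PowerSeries.coeff (R := K) k f) * G ^ k) *
         (∑ k ∈ Finset.range m, MvPowerSeries.C (σ := σ) (R := K) (PowerSeries.coeff (R := K) k g) * G ^ k)) := by
    apply coeff_mul_congr d
    · intro e he
      rw [coeff_sub hG f (m := m) (by omega), map_sum]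
      exact Finset.sum_congr rfl fun k _ => by rw [coeff_C_mul]
    · intro e he
      rw [coeff_sub hG g (m := m) (by omega), map_sum]
      exact Finset.sum_congr rfl fun k _ => by rw [coeff_C_mul]
  have hRHS : MvPowerSeries.coeff (R := K) d
      ((∑ k ∈ Finset.range m, MvPowerSeries.C (σ := σ) (R := K) (PowerSeries.coeff (R := K) k f) * G ^ k) *
       (∑ k ∈ Finset.range m, MvPowerSeries.C (σ := σ) (R := K) (PowerSeries.coeff (R := K) k g) * G ^ k)) =
      ∑ p ∈ Finset.range m ×ˢ Finset.range m,
        PowerSeries.coeff (R := K) p.1 f * PowerSeries.coeff (R := K) p.2 g *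
          MvPowerSeries.coeff (R := K) d (G ^ (p.1 + p.2)) := by
    rw [Finset.sum_mul_sum]
    simp only [map_sum]
    rw [← Finset.sum_product']
    apply Finset.sum_congr rfl
    rintro ⟨i, j⟩ _
    rw [show (MvPowerSeries.C (σ := σ) (R := K) (PowerSeries.coeff (R := K) i f) * G ^ i) *
         (MvPowerSeries.C (σ := σ) (R := K) (PowerSeries.coeff (R := K) j g) * G ^ j) =
       MvPowerSeries.C (σ := σ) (R := K) (PowerSeries.coeff (R := K) i f) *
         (MvPowerSeries.C (σ := σ) (R := K) (PowerSeries.coeff (R := K) j g) * G ^ (i + j)) from by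
      rw [pow_add]; ring]
    rw [coeff_C_mul, coeff_C_mul]
    ring
  rw [hstep, hRHS, ← sum_antidiag_prod m _
    (fun p hp => by
      rw [coeff_pow_eq_zero hG (show wt d < p.1 + p.2 by omega), mul_zero])]
  rw [coeff_sub hG (f * g) (m := m) (by omega)]
  apply Finset.sum_congr rfl
  intro k hk
  rw [PowerSeries.coeff_mul, Finset.sum_mul]
  apply Finset.sum_congr rfl
  rintro ⟨i, j⟩ hp
  have : i + j = k := Finset.HasAntidiagonal.mem_antidiagonal.mp hp
  rw [this]

/-- substitution as a ring homomorphism -/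
def subHom (G : MvPowerSeries σ K) (hG : constantCoeff (σ := σ) (R := K) G = 0) :
    PowerSeries K →+* MvPowerSeries σ K where
  toFun f := ssub f G
  map_one' := ssub_one G
  map_mul' f g := ssub_mul hG f g
  map_zero' := by
    have := ssub_C 0 G
    simpa using this
  map_add' f g := ssub_add f g G

@[simp] lemma subHom_apply (G : MvPowerSeries σ K) (hG) (f : PowerSeries K) :
    subHom G hG f = ssub f G := rfl


/-! ### one-variable interop -/

lemma wt_single (n : ℕ) : wt (Finsupp.single () n) = n := by
  simp [wt]

lemma pcoeff_eq (n : ℕ) (f : PowerSeries K) :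
    PowerSeries.coeff (R := K) n f = MvPowerSeries.coeff (R := K) (Finsupp.single () n) f := rfl

lemma pconst_eq (f : PowerSeries K) :
    PowerSeries.constantCoeff (R := K) f = MvPowerSeries.constantCoeff (σ := Unit) (R := K) f := rfl

lemma coeff1_sub {g : PowerSeries K} (hg : PowerSeries.constantCoeff (R := K) g = 0)
    (f : PowerSeries K) {n m : ℕ} (h : n < m) :
    PowerSeries.coeff (R := K) n (ssub f g) =
      ∑ k ∈ Finset.range m, PowerSeries.coeff (R := K) k f * PowerSeries.coeff (R := K) n (g ^ k) := by
  rw [pcoeff_eq]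
  rw [coeff_sub (σ := Unit) (by rw [← pconst_eq]; exact hg) f
    (d := Finsupp.single () n) (m := m) (by rw [wt_single]; omega)]
  exact Finset.sum_congr rfl fun k _ => by rw [← pcoeff_eq]

lemma coeff1_pow_eq_zero {g : PowerSeries K} (hg : PowerSeries.constantCoeff (R := K) g = 0)
    {k n : ℕ} (h : n < k) : PowerSeries.coeff (R := K) n (g ^ k) = 0 := by
  rw [pcoeff_eq]
  exact coeff_pow_eq_zero (σ := Unit) (by rw [← pconst_eq]; exact hg)
    (by rw [wt_single]; omega)

lemma constantCoeff1_ssub {g : PowerSeries K} (hg : PowerSeries.constantCoeff (R := K) g = 0)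
    (f : PowerSeries K) :
    PowerSeries.constantCoeff (R := K) (ssub f g) = PowerSeries.constantCoeff (R := K) f := by
  rw [pconst_eq]
  exact constantCoeff_ssub (by rw [← pconst_eq]; exact hg) f

lemma ssub_argX (f : PowerSeries K) : ssub f (PowerSeries.X : PowerSeries K) = f := by
  ext n
  rw [coeff1_sub (g := PowerSeries.X) (by simp) f (m := n + 1) (by omega)]
  rw [Finset.sum_eq_single n]
  · simp [PowerSeries.coeff_X_pow]
  · intro k _ hk
    rw [PowerSeries.coeff_X_pow, if_neg (fun hnk => hk hnk.symm), mul_zero]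
  · intro h
    simp at h

/-! ### rescale -/

lemma ssub_rescale (c : K) (f : PowerSeries K) (G : MvPowerSeries σ K) :
    ssub (PowerSeries.rescale c f) G = ssub f (MvPowerSeries.C (σ := σ) (R := K) c * G) := by
  ext d
  rw [coeff_sub_def, coeff_sub_def]
  apply Finset.sum_congr rfl
  intro k _
  rw [PowerSeries.coeff_rescale, mul_pow, ← map_pow, coeff_C_mul]
  ring

/-! ### exponential additivity -/

lemma ssub_exp_add {a b : MvPowerSeries σ K} (ha : constantCoeff (σ := σ) (R := K) a = 0)
    (hb : constantCoeff (σ := σ) (R := K) b = 0) :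
    ssub (PowerSeries.exp K) (a + b) =
      ssub (PowerSeries.exp K) a * ssub (PowerSeries.exp K) b := by
  have hab : constantCoeff (σ := σ) (R := K) (a + b) = 0 := by rw [map_add, ha, hb, add_zero]
  ext d
  set n := wt d with hn
  set m := n + 1 with hm
  set F : ℕ × ℕ → K := fun p =>
    algebraMap ℚ K (1 / p.1.factorial) * algebraMap ℚ K (1 / p.2.factorial) *
      MvPowerSeries.coeff (R := K) d (a ^ p.1 * b ^ p.2) with hF
  have hFz : ∀ p : ℕ × ℕ, m ≤ p.1 + p.2 → F p = 0 := by
    intro p hp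
    rw [hF]
    simp only
    rw [coeff_pow_pow_eq_zero ha hb (show wt d < p.1 + p.2 by omega), mul_zero]
  have hLHS : MvPowerSeries.coeff (R := K) d (ssub (PowerSeries.exp K) (a + b)) =
      ∑ k ∈ Finset.range m, ∑ p ∈ Finset.HasAntidiagonal.antidiagonal k, F p := by
    rw [coeff_sub hab _ (m := m) (by omega)]
    apply Finset.sum_congr rfl
    intro k _
    rw [add_pow, map_sum, Finset.mul_sum]
    rw [Finset.Nat.sum_antidiagonal_eq_sum_range_succ_mk]
    apply Finset.sum_congr rfl
    intro i hi
    rw [Finset.mem_range] at hi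
    have hik : i ≤ k := by omega
    rw [hF]
    simp only
    rw [PowerSeries.coeff_exp]
    have hcast : ((k.choose i : ℕ) : K) = algebraMap ℚ K ((k.choose i : ℕ) : ℚ) := by
      rw [map_natCast]
    rw [← map_natCast (MvPowerSeries.C (σ := σ) (R := K)) (k.choose i), mul_comm (a ^ i * b ^ (k - i)),
      coeff_C_mul]
    have hfac : (k.choose i : ℚ) * (i.factorial : ℚ) * ((k - i).factorial : ℚ) =
        (k.factorial : ℚ) := by
      exact_mod_cast congrArg (Nat.cast : ℕ → ℚ) (Nat.choose_mul_factorial_mul_factorial hik)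
    have hq : (1 / (k.factorial : ℚ)) * (k.choose i : ℚ) =
        (1 / (i.factorial : ℚ)) * (1 / ((k - i).factorial : ℚ)) := by
      have h1 : (i.factorial : ℚ) ≠ 0 := Nat.cast_ne_zero.mpr (Nat.factorial_ne_zero i)
      have h2 : ((k - i).factorial : ℚ) ≠ 0 := Nat.cast_ne_zero.mpr (Nat.factorial_ne_zero _)
      have h3 : (k.factorial : ℚ) ≠ 0 := Nat.cast_ne_zero.mpr (Nat.factorial_ne_zero k)
      field_simp
      linear_combination hfac
    calc (algebraMap ℚ K) (1 / (k.factorial : ℚ)) *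
          (((k.choose i : ℕ) : K) * MvPowerSeries.coeff (R := K) d (a ^ i * b ^ (k - i)))
        = ((algebraMap ℚ K) (1 / (k.factorial : ℚ)) * (algebraMap ℚ K) ((k.choose i : ℕ) : ℚ)) *
            MvPowerSeries.coeff (R := K) d (a ^ i * b ^ (k - i)) := by
          rw [map_natCast]; ring
      _ = _ := by rw [← map_mul, hq, map_mul]
  have hRHS : MvPowerSeries.coeff (R := K) d
      (ssub (PowerSeries.exp K) a * ssub (PowerSeries.exp K) b) =
      ∑ p ∈ Finset.range m ×ˢ Finset.range m, F p := by
    have hstep : MvPowerSeries.coeff (R := K) d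
        (ssub (PowerSeries.exp K) a * ssub (PowerSeries.exp K) b) =
        MvPowerSeries.coeff (R := K) d
          ((∑ k ∈ Finset.range m, MvPowerSeries.C (σ := σ) (R := K) (PowerSeries.coeff (R := K) k (PowerSeries.exp K)) * a ^ k) *
           (∑ k ∈ Finset.range m, MvPowerSeries.C (σ := σ) (R := K) (PowerSeries.coeff (R := K) k (PowerSeries.exp K)) * b ^ k)) := by
      apply coeff_mul_congr d
      · intro e he
        rw [coeff_sub ha _ (m := m) (by omega), map_sum]
        exact Finset.sum_congr rfl fun k _ => by rw [coeff_C_mul]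
      · intro e he
        rw [coeff_sub hb _ (m := m) (by omega), map_sum]
        exact Finset.sum_congr rfl fun k _ => by rw [coeff_C_mul]
    rw [hstep, Finset.sum_mul_sum]
    simp only [map_sum]
    rw [← Finset.sum_product']
    apply Finset.sum_congr rfl
    rintro ⟨i, j⟩ _
    rw [show (MvPowerSeries.C (σ := σ) (R := K) (PowerSeries.coeff (R := K) i (PowerSeries.exp K)) * a ^ i) *
         (MvPowerSeries.C (σ := σ) (R := K) (PowerSeries.coeff (R := K) j (PowerSeries.exp K)) * b ^ j) =
       MvPowerSeries.C (σ := σ) (R := K) (PowerSeries.coeff (R := K) i (PowerSeries.exp K)) *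
         (MvPowerSeries.C (σ := σ) (R := K) (PowerSeries.coeff (R := K) j (PowerSeries.exp K)) * (a ^ i * b ^ j)) from by
      ring]
    rw [coeff_C_mul, coeff_C_mul, hF]
    simp only [PowerSeries.coeff_exp]
    ring
  rw [hLHS, hRHS, sum_antidiag_prod m F hFz]


/-! ### composition -/

lemma ssub_ssub {g : PowerSeries K} (hg : PowerSeries.constantCoeff (R := K) g = 0)
    {G : MvPowerSeries σ K} (hG : constantCoeff (σ := σ) (R := K) G = 0) (f : PowerSeries K) :
    ssub f (ssub g G) = ssub (ssub f g) G := by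
  have hH : constantCoeff (σ := σ) (R := K) (ssub g G) = 0 := by
    rw [constantCoeff_ssub hG g, hg]
  ext d
  set n := wt d with hn
  set m := n + 1 with hm
  rw [coeff_sub hH f (m := m) (by omega), coeff_sub hG (ssub f g) (m := m) (by omega)]
  have hpow : ∀ k : ℕ, (ssub g G) ^ k = ssub (g ^ k) G := fun k =>
    (map_pow (subHom G hG) g k).symm
  calc ∑ k ∈ Finset.range m, PowerSeries.coeff (R := K) k f *
          MvPowerSeries.coeff (R := K) d ((ssub g G) ^ k)
      = ∑ k ∈ Finset.range m, ∑ j ∈ Finset.range m, PowerSeries.coeff (R := K) k f *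
          (PowerSeries.coeff (R := K) j (g ^ k) * MvPowerSeries.coeff (R := K) d (G ^ j)) := by
        apply Finset.sum_congr rfl
        intro k _
        rw [hpow k, coeff_sub hG (g ^ k) (m := m) (by omega), Finset.mul_sum]
    _ = ∑ j ∈ Finset.range m, ∑ k ∈ Finset.range m, PowerSeries.coeff (R := K) k f *
          (PowerSeries.coeff (R := K) j (g ^ k) * MvPowerSeries.coeff (R := K) d (G ^ j)) :=
        Finset.sum_comm
    _ = ∑ j ∈ Finset.range m, PowerSeries.coeff (R := K) j (ssub f g) *
          MvPowerSeries.coeff (R := K) d (G ^ j) := by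
        apply Finset.sum_congr rfl
        intro j hj
        rw [Finset.mem_range] at hj
        rw [coeff1_sub hg f (m := m) hj, Finset.sum_mul]
        exact Finset.sum_congr rfl fun k _ => by ring

/-! ### injectivity -/

lemma coeff1_pow_self {g : PowerSeries K} (hg : PowerSeries.constantCoeff (R := K) g = 0) :
    ∀ n : ℕ, PowerSeries.coeff (R := K) n (g ^ n) = (PowerSeries.coeff (R := K) 1 g) ^ n := by
  intro n
  induction n with
  | zero => simp
  | succ n ih =>
    rw [pow_succ', PowerSeries.coeff_mul, Finset.sum_eq_single (1, n)]
    · rw [ih, pow_succ']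
    · rintro ⟨u, v⟩ hp hne
      rw [Finset.HasAntidiagonal.mem_antidiagonal] at hp
      by_cases hu : u = 0
      · subst hu
        rw [show PowerSeries.coeff (R := K) 0 g = 0 by
          rw [PowerSeries.coeff_zero_eq_constantCoeff]; exact hg, zero_mul]
      · have hu1 : 1 ≤ u := Nat.one_le_iff_ne_zero.mpr hu
        have hv : v < n := by
          rcases Nat.lt_or_ge v n with hlt | hge
          · exact hlt
          · exfalso
            have huv : u = 1 ∧ v = n := by omega
            exact hne (by simp [huv.1, huv.2])
        rw [coeff1_pow_eq_zero hg hv, mul_zero]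
    · intro h
      exact absurd (Finset.HasAntidiagonal.mem_antidiagonal.mpr (by omega)) h

lemma ssub_inj {g : PowerSeries K} (hg : PowerSeries.constantCoeff (R := K) g = 0)
    (hg1 : PowerSeries.coeff (R := K) 1 g ≠ 0) {h : PowerSeries K}
    (hh : ssub h g = 0) : h = 0 := by
  ext n
  induction n using Nat.strong_induction_on with
  | _ n ih =>
    have h0 : PowerSeries.coeff (R := K) n (ssub h g) = 0 := by rw [hh]; simp
    rw [coeff1_sub hg h (m := n + 1) (by omega)] at h0
    rw [Finset.sum_eq_single n] at h0
    · rw [coeff1_pow_self hg] at h0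
      have := pow_ne_zero n hg1
      simp only [map_zero]
      exact (mul_eq_zero.mp h0).resolve_right this
    · intro k hk hkn
      rw [Finset.mem_range] at hk
      rw [ih k (by omega)]
      simp
    · intro h'
      simp at h'
  

/-! ### derivative of substitution (one variable) -/

lemma derivative_ssub {g : PowerSeries K} (hg : PowerSeries.constantCoeff (R := K) g = 0)
    (f : PowerSeries K) :
    (PowerSeries.derivative K) (ssub f g) = ssub ((PowerSeries.derivative K) f) g * (PowerSeries.derivative K) g := by
  ext n
  rw [PowerSeries.coeff_derivative]
  rw [coeff1_sub hg f (m := n + 2) (by omega), Finset.sum_mul]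
  have hterm : ∀ k : ℕ, PowerSeries.coeff (R := K) k f * PowerSeries.coeff (R := K) (n + 1) (g ^ k) * (n + 1) =
      PowerSeries.coeff (R := K) k f * ((k : K) * PowerSeries.coeff (R := K) n (g ^ (k - 1) * (PowerSeries.derivative K) g)) := by
    intro k
    have : PowerSeries.coeff (R := K) (n + 1) (g ^ k) * (n + 1) =
        PowerSeries.coeff (R := K) n ((PowerSeries.derivative K) (g ^ k)) := (PowerSeries.coeff_derivative _ _).symm
    rw [mul_assoc, this, Derivation.leibniz_pow, smul_eq_mul, map_nsmul, nsmul_eq_mul]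
  rw [Finset.sum_congr rfl fun k _ => hterm k]
  rw [Finset.sum_range_succ' (fun k => PowerSeries.coeff (R := K) k f *
      ((k : K) * PowerSeries.coeff (R := K) n (g ^ (k - 1) * (PowerSeries.derivative K) g))) (n + 1)]
  simp only [Nat.cast_zero, zero_mul, mul_zero, add_zero, Nat.add_sub_cancel]
  rw [PowerSeries.coeff_mul]
  have hrepl : ∀ p : ℕ × ℕ, p ∈ Finset.HasAntidiagonal.antidiagonal n →
      PowerSeries.coeff (R := K) p.1 (ssub ((PowerSeries.derivative K) f) g) * PowerSeries.coeff (R := K) p.2 ((PowerSeries.derivative K) g) =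
      ∑ k ∈ Finset.range (n + 1), PowerSeries.coeff (R := K) k ((PowerSeries.derivative K) f) *
        (PowerSeries.coeff (R := K) p.1 (g ^ k) * PowerSeries.coeff (R := K) p.2 ((PowerSeries.derivative K) g)) := by
    rintro ⟨u, v⟩ hp
    have hp' : u + v = n := Finset.HasAntidiagonal.mem_antidiagonal.mp hp
    rw [coeff1_sub hg _ (m := n + 1) (by omega), Finset.sum_mul]
    exact Finset.sum_congr rfl fun k _ => by ring
  rw [Finset.sum_congr rfl hrepl, Finset.sum_comm]
  apply Finset.sum_congr rfl
  intro k _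
  rw [← Finset.mul_sum, ← PowerSeries.coeff_mul, PowerSeries.coeff_derivative]
  push_cast
  ring

/-- `ℓ = Σ_{k ≥ 1} T^k/k` -/
def ell : PowerSeries K := PowerSeries.mk fun k => ((k : K))⁻¹

lemma constantCoeff_ell : PowerSeries.constantCoeff (R := K) ell = 0 := by
  rw [← PowerSeries.coeff_zero_eq_constantCoeff]
  simp [ell]

lemma derivative_ell : (PowerSeries.derivative K) ell = PowerSeries.mk 1 := by
  ext n
  rw [PowerSeries.coeff_derivative]
  simp only [ell, PowerSeries.coeff_mk, Pi.one_apply]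
  push_cast
  rw [inv_mul_cancel₀]
  exact natCast_succ_ne n

lemma derivative_exp : (PowerSeries.derivative K) (PowerSeries.exp K) = PowerSeries.exp K := by
  ext n
  rw [PowerSeries.coeff_derivative, PowerSeries.coeff_exp, PowerSeries.coeff_exp]
  have : ((n : K) + 1) = algebraMap ℚ K ((n : ℚ) + 1) := by
    rw [map_add, map_natCast, map_one]
  rw [this, ← map_mul]
  congr 1
  rw [Nat.factorial_succ]
  have h1 : ((n + 1).factorial : ℚ) ≠ 0 := Nat.cast_ne_zero.mpr (Nat.factorial_ne_zero _)
  have h2 : (n.factorial : ℚ) ≠ 0 := Nat.cast_ne_zero.mpr (Nat.factorial_ne_zero _)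
  field_simp
  try push_cast
  try ring

/-- the core identity : `exp(ℓ) · (1 - T) = 1`. -/
lemma core : ssub (PowerSeries.exp K) ell * (1 - PowerSeries.X) = 1 := by
  set e : PowerSeries K := ssub (PowerSeries.exp K) ell with he
  have hD : (PowerSeries.derivative K) (e * (1 - PowerSeries.X)) = 0 := by
    rw [Derivation.leibniz, smul_eq_mul, smul_eq_mul]
    rw [map_sub, PowerSeries.derivative_X, Derivation.map_one_eq_zero, zero_sub]
    rw [he, derivative_ssub constantCoeff_ell, derivative_exp, derivative_ell]
    have := PowerSeries.mk_one_mul_one_sub_eq_one (S := K)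
    linear_combination (ssub (PowerSeries.exp K) ell) * this
  ext n
  cases n with
  | zero =>
    simp only [PowerSeries.coeff_zero_eq_constantCoeff, map_mul, map_sub, map_one,
      PowerSeries.constantCoeff_X, sub_zero, mul_one]
    rw [he, constantCoeff1_ssub constantCoeff_ell, PowerSeries.constantCoeff_exp]
  | succ n =>
    have h0 : PowerSeries.coeff (R := K) n ((PowerSeries.derivative K) (e * (1 - PowerSeries.X))) = 0 := by rw [hD]; simp
    rw [PowerSeries.coeff_derivative] at h0
    have hne : ((n : K) + 1) ≠ 0 := natCast_succ_ne n
    have := mul_eq_zero.mp h0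
    rcases this with h | h
    · rw [h]
      simp [PowerSeries.coeff_one]
    · exact absurd h hne

/-! ### rescale of argument -/

lemma ssub_rescale_arg (c : K) {g : PowerSeries K} (hg : PowerSeries.constantCoeff (R := K) g = 0)
    (f : PowerSeries K) :
    PowerSeries.rescale c (ssub f g) = ssub f (PowerSeries.rescale c g) := by
  have hrg : PowerSeries.constantCoeff (R := K) (PowerSeries.rescale c g) = 0 := by
    rw [← PowerSeries.coeff_zero_eq_constantCoeff] at hg ⊢
    rw [PowerSeries.coeff_rescale, hg, mul_zero]
  ext n
  rw [PowerSeries.coeff_rescale, coeff1_sub hg f (m := n + 1) (by omega),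
    coeff1_sub hrg f (m := n + 1) (by omega), Finset.mul_sum]
  apply Finset.sum_congr rfl
  intro k _
  rw [← map_pow, PowerSeries.coeff_rescale]
  ring



lemma pC_eq (a : K) : MvPowerSeries.C (σ := Unit) (R := K) a = PowerSeries.C (R := K) a := rfl

lemma one_sub_q_ne : (1 : K) - q ≠ 0 := by
  intro h
  have inj : Function.Injective (algebraMap (Polynomial ℚ) (RatFunc ℚ)) :=
    RatFunc.algebraMap_injective ℚ
  have h2 : (algebraMap (Polynomial ℚ) (RatFunc ℚ)) (1 - Polynomial.X) =
      (algebraMap (Polynomial ℚ) (RatFunc ℚ)) 0 := by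
    rw [map_sub, map_one, map_zero, RatFunc.algebraMap_X]
    exact h
  have h3 := inj h2
  have := congrArg (fun p => Polynomial.coeff p 1) h3
  simp only [Polynomial.coeff_sub, Polynomial.coeff_one, Polynomial.coeff_X_one,
    Polynomial.coeff_zero] at this
  norm_num at this

lemma logChi_const : PowerSeries.constantCoeff (R := K) logChi = 0 := by
  rw [← PowerSeries.coeff_zero_eq_constantCoeff]
  simp [logChi]

lemma logChi_coeff1 : PowerSeries.coeff (R := K) 1 logChi = 1 := by
  simp [logChi]

/-- `g_q = (1-q)·logχ` -/
noncomputable def gq : PowerSeries K := PowerSeries.C (R := K) (1 - q) * logChi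

lemma gq_const : PowerSeries.constantCoeff (R := K) gq = 0 := by
  rw [gq, map_mul, logChi_const, mul_zero]

lemma gq_eq : gq = ell - PowerSeries.rescale q ell := by
  ext k
  rw [gq, PowerSeries.coeff_C_mul, map_sub, PowerSeries.coeff_rescale]
  simp only [logChi, ell, PowerSeries.coeff_mk]
  cases k with
  | zero => simp
  | succ n =>
    have hgeom : (∑ i ∈ Finset.range (n + 1), q ^ i) * (q - 1) = q ^ (n + 1) - 1 :=
      geom_sum_mul q (n + 1)
    have hk : ((n + 1 : ℕ) : K) ≠ 0 := by
      have : ((n + 1 : ℕ) : K) = (n : K) + 1 := by push_cast; ring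
      rw [this]
      exact natCast_succ_ne n
    rw [div_eq_mul_inv]
    linear_combination (-(((n + 1 : ℕ) : K))⁻¹) * hgeom

/-- `h₁ = exp_χ... = E(logχ)` as explicit series -/
noncomputable def hone : PowerSeries K := SAux.ssub (PowerSeries.exp K) gq

lemma key1 : hone * (1 - PowerSeries.X) = 1 - PowerSeries.C (R := K) q * PowerSeries.X := by
  set e : PowerSeries K := ssub (PowerSeries.exp K) ell with he
  have e1 : e * (1 - PowerSeries.X) = 1 := core
  have e2 : PowerSeries.rescale q e * (1 - PowerSeries.C (R := K) q * PowerSeries.X) = 1 := by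
    have := congrArg (PowerSeries.rescale q) e1
    simp only [map_mul, map_sub, map_one, PowerSeries.rescale_X] at this
    exact this
  have e3 : hone * PowerSeries.rescale q e = e := by
    rw [he, ssub_rescale_arg q constantCoeff_ell]
    have hmv1 : MvPowerSeries.constantCoeff (σ := Unit) (R := K) gq = 0 := by
      rw [← pconst_eq]; exact gq_const
    have hresc : PowerSeries.constantCoeff (R := K) (PowerSeries.rescale q ell) = 0 := by
      rw [← PowerSeries.coeff_zero_eq_constantCoeff, PowerSeries.coeff_rescale,
        PowerSeries.coeff_zero_eq_constantCoeff, constantCoeff_ell, mul_zero]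
    have hmv2 : MvPowerSeries.constantCoeff (σ := Unit) (R := K) (PowerSeries.rescale q ell) = 0 := by
      rw [← pconst_eq]; exact hresc
    rw [hone, ← ssub_exp_add (σ := Unit) hmv1 hmv2]
    congr 1
    rw [gq_eq]
    ring
  linear_combination (1 - PowerSeries.C (R := K) q * PowerSeries.X) * e1 -
    (hone * (1 - PowerSeries.X)) * e2 +
    ((1 - PowerSeries.X) * (1 - PowerSeries.C (R := K) q * PowerSeries.X)) * e3

lemma E_const : PowerSeries.constantCoeff (R := K) E = 1 := by
  rw [E, ← PowerSeries.coeff_zero_eq_constantCoeff, PowerSeries.coeff_rescale]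
  simp [PowerSeries.coeff_zero_eq_constantCoeff, PowerSeries.constantCoeff_exp]

lemma hinvE : (E - PowerSeries.C (R := K) q) * (E - PowerSeries.C (R := K) q)⁻¹ = 1 := by
  apply PowerSeries.mul_inv_cancel
  rw [map_sub, E_const, PowerSeries.constantCoeff_C]
  exact fun h => one_sub_q_ne h

lemma expChi_const : PowerSeries.constantCoeff (R := K) expChi = 0 := by
  rw [expChi, map_mul, map_sub, E_const, map_one, sub_self, zero_mul]

lemma ssub_E {σ : Type} [DecidableEq σ] (G : MvPowerSeries σ K) :
    ssub E G = ssub (PowerSeries.exp K) (MvPowerSeries.C (σ := σ) (R := K) (1 - q) * G) := by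
  rw [E, ssub_rescale]

lemma hlog_mv : MvPowerSeries.constantCoeff (σ := Unit) (R := K) logChi = 0 := by
  rw [← pconst_eq]; exact logChi_const

lemma ssub_E_logChi : ssub E logChi = hone := by
  rw [ssub_E, pC_eq]
  rfl

lemma key1' : ssub expChi logChi = PowerSeries.X := by
  set Φ := subHom (σ := Unit) logChi hlog_mv with hΦ
  have hD : Φ (E - PowerSeries.C (R := K) q) = hone - PowerSeries.C (R := K) q := by
    rw [map_sub, hΦ, subHom_apply, subHom_apply, ssub_E_logChi, ssub_C, pC_eq]
  have hDI : (hone - PowerSeries.C (R := K) q) * Φ ((E - PowerSeries.C (R := K) q)⁻¹) = 1 := by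
    rw [← hD, ← map_mul, hinvE, map_one]
  have hfac : hone - 1 = PowerSeries.X * (hone - PowerSeries.C (R := K) q) := by
    linear_combination key1
  have hE1 : Φ (E - 1) = hone - 1 := by
    rw [map_sub, map_one, hΦ, subHom_apply, ssub_E_logChi]
  calc ssub expChi logChi = Φ expChi := rfl
    _ = Φ (E - 1) * Φ ((E - PowerSeries.C (R := K) q)⁻¹) := by rw [expChi, map_mul]
    _ = PowerSeries.X * ((hone - PowerSeries.C (R := K) q) * Φ ((E - PowerSeries.C (R := K) q)⁻¹)) := by
        rw [hE1, hfac]; ring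
    _ = PowerSeries.X := by rw [hDI, mul_one]

lemma key2 : ssub logChi expChi = PowerSeries.X := by
  have hexp_mv : MvPowerSeries.constantCoeff (σ := Unit) (R := K) expChi = 0 := by
    rw [← pconst_eq]; exact expChi_const
  have hcomp := ssub_ssub (g := expChi) expChi_const (G := (logChi : MvPowerSeries Unit K))
    hlog_mv logChi
  rw [key1', ssub_argX] at hcomp
  have hX : ssub (PowerSeries.X : PowerSeries K) (logChi : MvPowerSeries Unit K) = logChi :=
    ssub_X hlog_mv
  have hzero : ssub (ssub logChi expChi - PowerSeries.X) (logChi : MvPowerSeries Unit K) = 0 := by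
    have := map_sub (subHom (σ := Unit) logChi hlog_mv) (ssub logChi expChi) PowerSeries.X
    rw [subHom_apply, subHom_apply, subHom_apply] at this
    rw [this, ← hcomp, hX, sub_self]
  have := ssub_inj logChi_const (by rw [logChi_coeff1]; exact one_ne_zero) hzero
  exact sub_eq_zero.mp this


lemma substInto_eq (f : PowerSeries K) (G' : MvPowerSeries (Fin 2) K) :
    substInto f G' = ssub f G' := rfl

lemma hXc (i : Fin 2) : MvPowerSeries.constantCoeff (σ := Fin 2) (R := K) (MvPowerSeries.X i) = 0 :=
  MvPowerSeries.constantCoeff_X i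

lemma claim_i (i : Fin 2) :
    ssub hone (MvPowerSeries.X i : MvPowerSeries (Fin 2) K) * (1 - MvPowerSeries.X i) =
      1 - MvPowerSeries.C (σ := Fin 2) (R := K) q * MvPowerSeries.X i := by
  have h := congrArg (subHom (MvPowerSeries.X i : MvPowerSeries (Fin 2) K) (hXc i)) key1
  simp only [map_mul, map_sub, map_one, subHom_apply] at h
  rw [ssub_X (hXc i), ssub_C] at h
  exact h

section main

variable (L : MvPowerSeries (Fin 2) K)

lemma ssub_gq_Xi (i : Fin 2) :
    ssub gq (MvPowerSeries.X i : MvPowerSeries (Fin 2) K) =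
      MvPowerSeries.C (σ := Fin 2) (R := K) (1 - q) * ssub logChi (MvPowerSeries.X i) := by
  rw [gq, ssub_mul (hXc i), ssub_C]

lemma hPE :
    ssub E (ssub logChi (MvPowerSeries.X 0) + ssub logChi (MvPowerSeries.X 1) :
        MvPowerSeries (Fin 2) K) =
      ssub hone (MvPowerSeries.X 0) * ssub hone (MvPowerSeries.X 1) := by
  have hgqX : ∀ i : Fin 2, MvPowerSeries.constantCoeff (σ := Fin 2) (R := K)
      (ssub gq (MvPowerSeries.X i)) = 0 := fun i => by
    rw [constantCoeff_ssub (hXc i) gq, gq_const]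
  rw [ssub_E]
  have hCL : MvPowerSeries.C (σ := Fin 2) (R := K) (1 - q) *
      (ssub logChi (MvPowerSeries.X 0) + ssub logChi (MvPowerSeries.X 1)) =
      ssub gq (MvPowerSeries.X 0) + ssub gq (MvPowerSeries.X 1) := by
    rw [ssub_gq_Xi, ssub_gq_Xi]
    ring
  rw [hCL, ssub_exp_add (hgqX 0) (hgqX 1)]
  rw [ssub_ssub gq_const (hXc 0) (PowerSeries.exp K),
    ssub_ssub gq_const (hXc 1) (PowerSeries.exp K)]
  rfl

end main


end SAux

open SAux in
/-- `exp_χ(log_χ(X) + log_χ(Y)) = G(X,Y)` in `K⟦X,Y⟧`; equivalently,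
`log_χ(G(X,Y)) = log_χ(X) + log_χ(Y)`, i.e. `log_χ` is a logarithm for the
formal group law `G`. -/
theorem stmt7 :
    substInto expChi
        (substInto logChi (MvPowerSeries.X 0) + substInto logChi (MvPowerSeries.X 1)) =
      G ∧
    substInto logChi G =
      substInto logChi (MvPowerSeries.X 0) + substInto logChi (MvPowerSeries.X 1) := by

  classical
  set X0 : MvPowerSeries (Fin 2) K := MvPowerSeries.X 0 with hX0def
  set X1 : MvPowerSeries (Fin 2) K := MvPowerSeries.X 1 with hX1def
  set L : MvPowerSeries (Fin 2) K := ssub logChi X0 + ssub logChi X1 with hLdef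
  have hL : MvPowerSeries.constantCoeff (σ := Fin 2) (R := K) L = 0 := by
    rw [hLdef, map_add, constantCoeff_ssub (hXc 0) logChi,
      constantCoeff_ssub (hXc 1) logChi, logChi_const, add_zero]
  set Cq : MvPowerSeries (Fin 2) K := MvPowerSeries.C (σ := Fin 2) (R := K) q with hCq
  set PL : MvPowerSeries (Fin 2) K := ssub E L with hPL
  set P0 : MvPowerSeries (Fin 2) K := ssub hone X0 with hP0
  set P1 : MvPowerSeries (Fin 2) K := ssub hone X1 with hP1
  have hPE' : PL = P0 * P1 := hPE
  have hc0 : P0 * (1 - X0) = 1 - Cq * X0 := claim_i 0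
  have hc1 : P1 * (1 - X1) = 1 - Cq * X1 := claim_i 1
  have keyL : PL * ((1 - X0) * (1 - X1)) = (1 - Cq * X0) * (1 - Cq * X1) := by
    rw [hPE']
    linear_combination (P1 * (1 - X1)) * hc0 + (1 - Cq * X0) * hc1
  set w : MvPowerSeries (Fin 2) K := 1 - Cq * X0 * X1 with hw
  set u : MvPowerSeries (Fin 2) K := MvPowerSeries.invOfUnit w 1 with hu'
  have hwc : MvPowerSeries.constantCoeff (σ := Fin 2) (R := K) w = 1 := by
    rw [hw, map_sub, map_one, map_mul, map_mul, hCq, MvPowerSeries.constantCoeff_C,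
      hX0def, MvPowerSeries.constantCoeff_X, mul_zero, zero_mul, sub_zero]
  have hu : w * u = 1 := MvPowerSeries.mul_invOfUnit w 1 (by rw [hwc, Units.val_one])
  set N : MvPowerSeries (Fin 2) K :=
    X0 + X1 - MvPowerSeries.C (σ := Fin 2) (R := K) (1 + q) * X0 * X1 with hN
  have hGdef : G = N * u := rfl
  set Φ := subHom L hL with hΦ
  have hDq : Φ (E - PowerSeries.C (R := K) q) = PL - Cq := by
    rw [map_sub, hΦ, subHom_apply, subHom_apply, ssub_C, hPL, hCq]
  have hDI : (PL - Cq) * Φ ((E - PowerSeries.C (R := K) q)⁻¹) = 1 := by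
    rw [← hDq, ← map_mul, hinvE, map_one]
  set I : MvPowerSeries (Fin 2) K := Φ ((E - PowerSeries.C (R := K) q)⁻¹) with hI
  have hCsum : MvPowerSeries.C (σ := Fin 2) (R := K) (1 + q) = 1 + Cq := by
    rw [map_add, map_one, hCq]
  have hpoly : (PL - 1) * w = N * (PL - Cq) := by
    rw [hN, hCsum, hw]
    linear_combination keyL
  have hmain : substInto expChi L = N * u := by
    rw [substInto_eq]
    have : ssub expChi L = Φ (E - 1) * I := by
      rw [hI, hΦ, ← map_mul, ← expChi]
      rfl
    rw [this]
    have hE1 : Φ (E - 1) = PL - 1 := by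
      rw [map_sub, map_one, hΦ, subHom_apply, hPL]
    rw [hE1]
    linear_combination (N * u) * hDI - ((PL - 1) * I) * hu + (I * u) * hpoly
  constructor
  · rw [substInto_eq, substInto_eq]
    exact hmain.trans hGdef.symm
  · have hG' : G = ssub expChi L := by
      rw [hGdef, ← hmain, substInto_eq]
    rw [substInto_eq, substInto_eq, substInto_eq, hG']
    rw [ssub_ssub expChi_const hL logChi, key2, ssub_X hL]


end
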